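/- The lamplighter group L_m = ℤ_m ≀ ℤ (m ≥ 2) with generating set {a, t} has no regular language of geodesics: there is no regular language L over {a^{±1}, t^{±1}} such that every word in L is geodesic and every element of L_m has at least one representative in L. -/

import Mathlib

open scoped commutatorElement

/-- Relators for the lamplighter group `L_m = ℤ_m ≀ ℤ` in the wreath product
presentation `⟨a, t | a^m, [t^i a t^{-i}, t^j a t^{-j}]⟩`, where `a` is encoded
by `true` and `t` by `false`. -/
def lampRels (m : ℕ) : Set (FreeGroup Bool) :=
  {FreeGroup.of true ^ m} ∪
  {r | ∃ i j : ℤ,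
    r = ⁅FreeGroup.of false ^ i * FreeGroup.of true * FreeGroup.of false ^ (-i),
        FreeGroup.of false ^ j * FreeGroup.of true * FreeGroup.of false ^ (-j)⁆}

/-- The lamplighter group `L_m = ℤ_m ≀ ℤ`. -/
abbrev Lamp (m : ℕ) := PresentedGroup (lampRels m)

/-- The generator `a` of `L_m`. -/
noncomputable def la (m : ℕ) : Lamp m := PresentedGroup.of true

/-- The generator `t` of `L_m`. -/
noncomputable def lt (m : ℕ) : Lamp m := PresentedGroup.of false

/-- Word length of `g` with respect to the generating set `S` (and inverses):
the least length of a list of elements of `S ∪ S⁻¹` with product `g`. -/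
noncomputable def wordLength {G : Type*} [Group G] (S : Set G) (g : G) : ℕ :=
  sInf {n | ∃ l : List G, (∀ x ∈ l, x ∈ S ∨ x⁻¹ ∈ S) ∧ l.length = n ∧ l.prod = g}

namespace LampAux

@[ext]
structure LL (m : ℕ) where
  f : ℤ →₀ ZMod m
  z : ℤ

namespace LL
variable {m : ℕ}

/-- shift of a configuration by `z`. -/
noncomputable def sh (z : ℤ) (f : ℤ →₀ ZMod m) : ℤ →₀ ZMod m := Finsupp.mapDomain (· + z) f

lemma sh_apply (z : ℤ) (f : ℤ →₀ ZMod m) (x : ℤ) : sh z f x = f (x - z) := by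
  have h : Function.Injective (· + z : ℤ → ℤ) := add_left_injective z
  have : x = (x - z) + z := by ring
  conv_lhs => rw [this, sh, Finsupp.mapDomain_apply h]

lemma sh_add (z : ℤ) (f g : ℤ →₀ ZMod m) : sh z (f + g) = sh z f + sh z g :=
  Finsupp.mapDomain_add

@[simp] lemma sh_zero (z : ℤ) : sh z (0 : ℤ →₀ ZMod m) = 0 := Finsupp.mapDomain_zero

@[simp] lemma sh_zero' (f : ℤ →₀ ZMod m) : sh 0 f = f := by
  ext x; rw [sh_apply]; norm_num

lemma sh_sh (z w : ℤ) (f : ℤ →₀ ZMod m) : sh z (sh w f) = sh (w + z) f := by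
  ext x; rw [sh_apply, sh_apply, sh_apply]; ring_nf

@[simp] lemma sh_single (z x : ℤ) (c : ZMod m) :
    sh z (Finsupp.single x c) = Finsupp.single (x + z) c := Finsupp.mapDomain_single

lemma sh_neg (z : ℤ) (f : ℤ →₀ ZMod m) : sh z (-f) = -(sh z f) := by
  ext x; rw [sh_apply, Finsupp.neg_apply, Finsupp.neg_apply, sh_apply]

noncomputable instance : Mul (LL m) := ⟨fun a b => ⟨a.f + sh a.z b.f, a.z + b.z⟩⟩
noncomputable instance : One (LL m) := ⟨⟨0, 0⟩⟩
noncomputable instance : Inv (LL m) := ⟨fun a => ⟨-(sh (-a.z) a.f), -a.z⟩⟩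

@[simp] lemma mul_f (a b : LL m) : (a * b).f = a.f + sh a.z b.f := rfl
@[simp] lemma mul_z (a b : LL m) : (a * b).z = a.z + b.z := rfl
@[simp] lemma one_f : (1 : LL m).f = 0 := rfl
@[simp] lemma one_z : (1 : LL m).z = 0 := rfl
@[simp] lemma inv_f (a : LL m) : (a⁻¹).f = -(sh (-a.z) a.f) := rfl
@[simp] lemma inv_z (a : LL m) : (a⁻¹).z = -a.z := rfl

noncomputable instance : Group (LL m) where
  mul_assoc a b c := by
    ext x
    · simp [sh_add, sh_sh, add_comm]
      abel
    · simp [add_assoc]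
  one_mul a := by ext x <;> simp
  mul_one a := by ext x <;> simp
  inv_mul_cancel a := by
    ext x
    · simp [sh_add, sh_neg, sh_sh]
    · simp

end LL

end LampAux
namespace LampAux
namespace LL
variable {m : ℕ}

/-- generator `a`. -/
noncomputable def A (m : ℕ) : LL m := ⟨Finsupp.single 0 1, 0⟩
/-- generator `t`. -/
noncomputable def T (m : ℕ) : LL m := ⟨0, 1⟩

@[simp] lemma A_f : (A m).f = Finsupp.single 0 1 := rfl
@[simp] lemma A_z : (A m).z = 0 := rfl
@[simp] lemma T_f : (T m).f = 0 := rfl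
@[simp] lemma T_z : (T m).z = 1 := rfl

lemma Ainv_eq : (A m)⁻¹ = ⟨Finsupp.single 0 (-1), 0⟩ := by
  ext x <;> simp [A]

lemma Tinv_eq : (T m)⁻¹ = ⟨0, -1⟩ := by
  ext x <;> simp [T]

@[simp] lemma Ainv_f : ((A m)⁻¹).f = Finsupp.single 0 (-1) := by rw [Ainv_eq]
@[simp] lemma Ainv_z : ((A m)⁻¹).z = 0 := by rw [Ainv_eq]
@[simp] lemma Tinv_f : ((T m)⁻¹).f = 0 := by rw [Tinv_eq]
@[simp] lemma Tinv_z : ((T m)⁻¹).z = -1 := by rw [Tinv_eq]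

lemma T_pow (n : ℕ) : (T m) ^ n = ⟨0, n⟩ := by
  induction n with
  | zero => ext x <;> simp
  | succ n ih => rw [pow_succ, ih]; ext x <;> simp

lemma T_zpow (i : ℤ) : (T m) ^ i = ⟨0, i⟩ := by
  cases i with
  | ofNat n => rw [Int.ofNat_eq_coe, zpow_natCast, T_pow]
  | negSucc n =>
      rw [zpow_negSucc, T_pow]
      ext x <;> simp [Int.negSucc_eq]

lemma A_pow (n : ℕ) : (A m) ^ n = ⟨Finsupp.single 0 (n : ZMod m), 0⟩ := by
  induction n with
  | zero => ext x <;> simp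
  | succ n ih =>
      rw [pow_succ, ih]
      ext x <;> simp [Finsupp.single_add]

lemma A_pow_m : (A m) ^ m = 1 := by
  rw [A_pow]; ext x <;> simp [ZMod.natCast_self]

lemma conjT (i : ℤ) : (T m) ^ i * A m * (T m) ^ (-i) = ⟨Finsupp.single i 1, 0⟩ := by
  rw [T_zpow, T_zpow]
  ext x
  · simp only [mul_f, A_f, T_f, T_zpow, sh_zero, add_zero, sh_apply, zero_add]
    rcases eq_or_ne i x with h | h
    · subst h; simp only [sub_self, Finsupp.single_eq_same]
    · rw [Finsupp.single_apply, Finsupp.single_apply, if_neg (by omega), if_neg h]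
  · simp

lemma comm_zero (a b : LL m) (ha : a.z = 0) (hb : b.z = 0) : a * b = b * a := by
  ext x <;> simp [ha, hb, add_comm]

end LL
end LampAux
namespace LampAux
namespace LL
variable {m : ℕ}

/-- the four letters. -/
def IsLetter (x : LL m) : Prop :=
  x = A m ∨ x = (A m)⁻¹ ∨ x = T m ∨ x = (T m)⁻¹

lemma z_cases {x : LL m} (h : IsLetter x) : x.z = 0 ∨ x.z = 1 ∨ x.z = -1 := by
  rcases h with h | h | h | h <;> subst h <;> simp

lemma f_of_z_ne {x : LL m} (h : IsLetter x) (hz : x.z ≠ 0) : x.f = 0 := by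
  rcases h with h | h | h | h <;> subst h <;> simp at hz ⊢

lemma a_of_z_eq {x : LL m} (h : IsLetter x) (hz : x.z = 0) :
    ∃ c : ZMod m, x.f = Finsupp.single 0 c ∧ (c = 1 ∨ c = -1) := by
  rcases h with h | h | h | h <;> subst h
  · exact ⟨1, rfl, Or.inl rfl⟩
  · exact ⟨-1, Ainv_f, Or.inr rfl⟩
  · simp at hz
  · simp at hz

noncomputable def Wz (l : List (LL m)) : ℤ := (l.map z).sum

noncomputable def Ff : List (LL m) → (ℤ →₀ ZMod m)
  | [] => 0
  | x :: l => x.f + sh x.z (Ff l)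

@[simp] lemma Wz_nil : Wz ([] : List (LL m)) = 0 := rfl
@[simp] lemma Wz_cons (x : LL m) (l : List (LL m)) : Wz (x :: l) = x.z + Wz l := by
  simp [Wz]
@[simp] lemma Ff_nil : Ff ([] : List (LL m)) = 0 := rfl
@[simp] lemma Ff_cons (x : LL m) (l : List (LL m)) : Ff (x :: l) = x.f + sh x.z (Ff l) := rfl

lemma Wz_append (l1 l2 : List (LL m)) : Wz (l1 ++ l2) = Wz l1 + Wz l2 := by
  simp [Wz]

lemma prod_eq (l : List (LL m)) : l.prod = ⟨Ff l, Wz l⟩ := by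
  induction l with
  | nil => rfl
  | cons x l ih => rw [List.prod_cons, ih]; ext y <;> simp

lemma Ff_append (l1 l2 : List (LL m)) :
    Ff (l1 ++ l2) = Ff l1 + sh (Wz l1) (Ff l2) := by
  induction l1 with
  | nil => simp
  | cons x l ih =>
      simp only [List.cons_append, Ff_cons, ih, Wz_cons, sh_add, sh_sh]
      rw [add_assoc, add_comm x.z (Wz l)]

lemma Ff_t_only {l : List (LL m)} (h : ∀ x ∈ l, x.f = 0) : Ff l = 0 := by
  induction l with
  | nil => rfl
  | cons x l ih =>
      simp only [Ff_cons, h x (by simp), ih (fun y hy => h y (by simp [hy])), sh_zero, add_zero,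
        zero_add]

noncomputable def countT (l : List (LL m)) : ℕ := (l.filter (fun x => x.z ≠ 0)).length
noncomputable def countA (l : List (LL m)) : ℕ := (l.filter (fun x => x.z = 0)).length

@[simp] lemma countT_nil : countT ([] : List (LL m)) = 0 := rfl
@[simp] lemma countA_nil : countA ([] : List (LL m)) = 0 := rfl

lemma countT_cons (x : LL m) (l : List (LL m)) :
    countT (x :: l) = (if x.z ≠ 0 then 1 else 0) + countT l := by
  simp only [countT, List.filter_cons]
  by_cases h : x.z = 0 <;> simp [h] <;> omega

lemma countA_cons (x : LL m) (l : List (LL m)) :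
    countA (x :: l) = (if x.z = 0 then 1 else 0) + countA l := by
  simp only [countA, List.filter_cons]
  by_cases h : x.z = 0 <;> simp [h] <;> omega

lemma length_eq_counts (l : List (LL m)) : l.length = countA l + countT l := by
  induction l with
  | nil => rfl
  | cons x l ih =>
      rw [List.length_cons, countT_cons, countA_cons, ih]
      by_cases h : x.z = 0 <;> simp [h] <;> omega

lemma natAbs_Wz_le {l : List (LL m)} (hl : ∀ x ∈ l, IsLetter x) :
    (Wz l).natAbs ≤ countT l := by
  induction l with
  | nil => simp
  | cons x l ih =>
      have hx := z_cases (hl x (by simp))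
      have ih' := ih (fun y hy => hl y (by simp [hy]))
      rw [Wz_cons, countT_cons]
      rcases hx with h | h | h <;> rw [h] <;> simp <;> omega

def HasA : List (LL m) → ℤ → Prop
  | [], _ => False
  | x :: l, w => (x.z = 0 ∧ w = 0) ∨ HasA l (w - x.z)

@[simp] lemma HasA_nil (w : ℤ) : ¬ HasA ([] : List (LL m)) w := fun h => h
lemma HasA_cons (x : LL m) (l : List (LL m)) (w : ℤ) :
    HasA (x :: l) w ↔ (x.z = 0 ∧ w = 0) ∨ HasA l (w - x.z) := Iff.rfl

lemma hasA_of_Ff_ne {l : List (LL m)} (hl : ∀ x ∈ l, IsLetter x) {w : ℤ}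
    (h : Ff l w ≠ 0) : HasA l w := by
  induction l generalizing w with
  | nil => simp [Ff] at h
  | cons x l ih =>
      rw [HasA_cons]
      by_contra hc
      push_neg at hc
      obtain ⟨h1, h2⟩ := hc
      have ih' : Ff l (w - x.z) = 0 := by
        by_contra hne
        exact h2 (ih (fun y hy => hl y (by simp [hy])) hne)
      have hx : x.f w = 0 := by
        rcases z_cases (hl x (by simp)) with h0 | h0 | h0
        · obtain ⟨c, hc1, _⟩ := a_of_z_eq (hl x (by simp)) h0
          rw [hc1, Finsupp.single_apply, if_neg (by intro hh; exact (h1 h0) hh.symm)]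
        · rw [f_of_z_ne (hl x (by simp)) (by omega)]; rfl
        · rw [f_of_z_ne (hl x (by simp)) (by omega)]; rfl
      apply h
      rw [Ff_cons, Finsupp.add_apply, hx, sh_apply, ih', add_zero]

end LL
end LampAux
namespace LampAux
namespace LL
variable {m : ℕ}

lemma walk_one {l : List (LL m)} (hl : ∀ x ∈ l, IsLetter x) {w : ℤ} (h : HasA l w) :
    w.natAbs + (Wz l - w).natAbs ≤ countT l := by
  induction l generalizing w with
  | nil => exact absurd h (HasA_nil w)
  | cons x l ih =>
      have hx := z_cases (hl x (by simp))
      have hl' : ∀ y ∈ l, IsLetter y := fun y hy => hl y (by simp [hy])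
      rw [HasA_cons] at h
      rw [Wz_cons, countT_cons]
      rcases h with ⟨hz, hw⟩ | h
      · have := natAbs_Wz_le hl'
        subst hw; rw [hz]
        simp only [zero_add, add_zero]
        omega
      · have := ih hl' h
        rcases hx with h0 | h0 | h0 <;> rw [h0] <;> simp <;> omega

lemma walk_two {l : List (LL m)} (hl : ∀ x ∈ l, IsLetter x) {w1 w2 : ℤ}
    (h1 : HasA l w1) (h2 : HasA l w2) :
    w1.natAbs + (w2 - w1).natAbs + (Wz l - w2).natAbs ≤ countT l ∨
    w2.natAbs + (w1 - w2).natAbs + (Wz l - w1).natAbs ≤ countT l := by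
  induction l generalizing w1 w2 with
  | nil => exact absurd h1 (HasA_nil w1)
  | cons x l ih =>
      have hx := z_cases (hl x (by simp))
      have hl' : ∀ y ∈ l, IsLetter y := fun y hy => hl y (by simp [hy])
      rw [HasA_cons] at h1 h2
      rw [Wz_cons, countT_cons]
      rcases h1 with ⟨hz, hw1⟩ | h1
      · rcases h2 with ⟨_, hw2⟩ | h2
        · subst hw1; subst hw2
          left
          have := natAbs_Wz_le hl'
          rw [hz]; simp only [zero_add, add_zero]; omega
        · subst hw1; rw [hz] at h2 ⊢
          left
          have := walk_one hl' (by simpa using h2)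
          simp only [zero_add, add_zero, Int.natAbs_zero, sub_zero] at *
          omega
      · rcases h2 with ⟨hz, hw2⟩ | h2
        · subst hw2; rw [hz] at h1 ⊢
          right
          have := walk_one hl' (by simpa using h1)
          simp only [zero_add, add_zero, Int.natAbs_zero, sub_zero] at *
          omega
        · rcases ih hl' h1 h2 with hc | hc
          · left
            rcases hx with h0 | h0 | h0 <;> rw [h0] at hc ⊢ <;> simp at hc ⊢ <;> omega
          · right
            rcases hx with h0 | h0 | h0 <;> rw [h0] at hc ⊢ <;> simp at hc ⊢ <;> omega

lemma support_card_le {l : List (LL m)} (hl : ∀ x ∈ l, IsLetter x) :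
    (Ff l).support.card ≤ countA l := by
  induction l with
  | nil => simp
  | cons x l ih =>
      have hl' : ∀ y ∈ l, IsLetter y := fun y hy => hl y (by simp [hy])
      have ih' := ih hl'
      have hsh : (sh x.z (Ff l)).support.card = (Ff l).support.card := by
        rw [sh, Finsupp.mapDomain_support_of_injective (add_left_injective x.z)]
        exact Finset.card_image_of_injective _ (add_left_injective x.z)
      have hb : (Ff (x :: l)).support.card ≤ x.f.support.card + (Ff l).support.card := by
        rw [Ff_cons]
        calc (x.f + sh x.z (Ff l)).support.card
            ≤ (x.f.support ∪ (sh x.z (Ff l)).support).card :=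
              Finset.card_le_card Finsupp.support_add
          _ ≤ x.f.support.card + (sh x.z (Ff l)).support.card := Finset.card_union_le _ _
          _ = x.f.support.card + (Ff l).support.card := by rw [hsh]
      rw [countA_cons]
      by_cases h0 : x.z = 0
      · obtain ⟨c, hc, _⟩ := a_of_z_eq (hl x (by simp)) h0
        have : x.f.support.card ≤ 1 := by
          rw [hc]
          exact le_trans (Finset.card_le_card Finsupp.support_single_subset) (by simp)
        simp only [if_pos h0]
        omega
      · have : x.f.support.card = 0 := by rw [f_of_z_ne (hl x (by simp)) h0]; simp
        simp only [if_neg h0]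
        omega

lemma rep_T {l : List (LL m)} (hl : ∀ x ∈ l, IsLetter x) (hz : ∀ x ∈ l, x.z ≠ 0)
    (h : Wz l = l.length) : l = List.replicate l.length (T m) := by
  induction l with
  | nil => simp
  | cons x l ih =>
      have hl' : ∀ y ∈ l, IsLetter y := fun y hy => hl y (by simp [hy])
      have hz' : ∀ y ∈ l, y.z ≠ 0 := fun y hy => hz y (by simp [hy])
      have hb : (Wz l).natAbs ≤ countT l := natAbs_Wz_le hl'
      have hcl : countT l ≤ l.length := List.length_filter_le _ _
      rw [Wz_cons] at h
      simp only [List.length_cons] at h ⊢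
      have hx1 : x.z = 1 := by
        rcases z_cases (hl x (by simp)) with h0 | h0 | h0
        · exact absurd h0 (hz x (by simp))
        · exact h0
        · omega
      have hxT : x = T m := by
        rcases hl x (by simp) with h0 | h0 | h0 | h0 <;> rw [h0] at hx1 ⊢ <;> simp at hx1 ⊢
      have hWl : Wz l = l.length := by omega
      rw [List.replicate_succ, hxT, ← ih hl' hz' hWl]

lemma rep_Tinv {l : List (LL m)} (hl : ∀ x ∈ l, IsLetter x) (hz : ∀ x ∈ l, x.z ≠ 0)
    (h : Wz l = -l.length) : l = List.replicate l.length ((T m)⁻¹) := by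
  induction l with
  | nil => simp
  | cons x l ih =>
      have hl' : ∀ y ∈ l, IsLetter y := fun y hy => hl y (by simp [hy])
      have hz' : ∀ y ∈ l, y.z ≠ 0 := fun y hy => hz y (by simp [hy])
      have hb : (Wz l).natAbs ≤ countT l := natAbs_Wz_le hl'
      have hcl : countT l ≤ l.length := List.length_filter_le _ _
      rw [Wz_cons] at h
      simp only [List.length_cons] at h ⊢
      have hx1 : x.z = -1 := by
        rcases z_cases (hl x (by simp)) with h0 | h0 | h0
        · exact absurd h0 (hz x (by simp))
        · omega
        · exact h0
      have hxT : x = (T m)⁻¹ := by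
        rcases hl x (by simp) with h0 | h0 | h0 | h0 <;> rw [h0] at hx1 ⊢ <;> simp at hx1 ⊢
      have hWl : Wz l = -l.length := by push_cast at h ⊢; omega
      rw [List.replicate_succ, hxT, ← ih hl' hz' hWl]

lemma two_split {α : Type*} (P : α → Prop) [DecidablePred P] :
    ∀ (l : List α), (l.filter (fun x => decide (P x))).length = 2 →
    ∃ u x v y w, l = u ++ x :: (v ++ y :: w) ∧ P x ∧ P y ∧
      (∀ z ∈ u, ¬P z) ∧ (∀ z ∈ v, ¬P z) ∧ (∀ z ∈ w, ¬P z) := by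
  intro l
  induction l with
  | nil => intro h; simp at h
  | cons a l ih =>
      intro h
      rw [List.filter_cons] at h
      by_cases hP : P a
      · have h1 : (l.filter (fun x => decide (P x))).length = 1 := by
          rw [if_pos (by simpa using hP)] at h
          simp only [List.length_cons] at h; omega
        -- split l at its unique P element
        obtain ⟨v, y, w, hvl, hy, hv, hw⟩ :
            ∃ v y w, l = v ++ y :: w ∧ P y ∧ (∀ z ∈ v, ¬P z) ∧ (∀ z ∈ w, ¬P z) := by
          clear ih h
          induction l with
          | nil => simp at h1
          | cons b l ih2 =>
              rw [List.filter_cons] at h1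
              by_cases hb : P b
              · rw [if_pos (by simpa using hb)] at h1
                simp only [List.length_cons] at h1
                have h0 : (l.filter (fun x => decide (P x))).length = 0 := by omega
                have hfn : l.filter (fun x => decide (P x)) = [] :=
                  List.eq_nil_of_length_eq_zero h0
                have hnil : ∀ z ∈ l, ¬P z := by
                  intro z hz hPz
                  have hmem : z ∈ l.filter (fun x => decide (P x)) := by
                    rw [List.mem_filter]; exact ⟨hz, by simpa using hPz⟩
                  rw [hfn] at hmem
                  simp at hmem
                exact ⟨[], b, l, by simp, hb, by simp, hnil⟩
              · rw [if_neg (by simpa using hb)] at h1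
                obtain ⟨v, y, w, h1', h2', h3', h4'⟩ := ih2 h1
                exact ⟨b :: v, y, w, by simp [h1'], h2', by
                  intro z hz; rcases List.mem_cons.1 hz with h | h
                  · subst h; exact hb
                  · exact h3' z h, h4'⟩
        exact ⟨[], a, v, y, w, by simp [hvl], hP, hy, by simp, hv, hw⟩
      · rw [if_neg (by simpa using hP)] at h
        obtain ⟨u, x, v, y, w, h1, h2, h3, h4, h5, h6⟩ := ih h
        refine ⟨a :: u, x, v, y, w, by simp [h1], h2, h3, ?_, h5, h6⟩
        intro z hz; rcases List.mem_cons.1 hz with h | h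
        · subst h; exact hP
        · exact h4 z h

end LL
end LampAux
namespace LampAux
namespace LL
variable {m : ℕ}

lemma countT_append (l1 l2 : List (LL m)) : countT (l1 ++ l2) = countT l1 + countT l2 := by
  simp [countT, List.filter_append]

lemma countT_eq_length {l : List (LL m)} (h : ∀ x ∈ l, x.z ≠ 0) : countT l = l.length := by
  induction l with
  | nil => rfl
  | cons x l ih =>
      rw [countT_cons, if_pos (h x (by simp)), List.length_cons,
        ih (fun y hy => h y (by simp [hy]))]
      omega

lemma Wz_replicate_T (n : ℕ) : Wz (List.replicate n (T m)) = n := by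
  induction n with
  | zero => simp
  | succ n ih => rw [List.replicate_succ, Wz_cons, ih, T_z]; push_cast; ring

lemma Wz_replicate_Tinv (n : ℕ) : Wz (List.replicate n ((T m)⁻¹)) = -n := by
  induction n with
  | zero => simp
  | succ n ih => rw [List.replicate_succ, Wz_cons, ih, Tinv_z]; push_cast; ring

/-- The canonical geodesic word for the element with lamps at `-1` and `p` and cursor `e`. -/
noncomputable def canonG (p e : ℕ) : List (LL m) :=
  (T m)⁻¹ :: A m :: (List.replicate (p + 1) (T m) ++ A m :: List.replicate (p - e) ((T m)⁻¹))

lemma canonG_letters (p e : ℕ) : ∀ x ∈ (canonG p e : List (LL m)), IsLetter x := by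
  intro x hx
  simp only [canonG, List.mem_cons, List.mem_append, List.eq_of_mem_replicate] at hx
  rcases hx with h | h | h | h
  · exact Or.inr (Or.inr (Or.inr h))
  · exact Or.inl h
  · exact Or.inr (Or.inr (Or.inl (List.eq_of_mem_replicate h)))
  · rcases h with h | h
    · exact Or.inl h
    · exact Or.inr (Or.inr (Or.inr (List.eq_of_mem_replicate h)))

lemma canonG_length (p e : ℕ) (he : e ≤ p) :
    (canonG p e : List (LL m)).length + e = 2 * p + 4 := by
  simp [canonG]
  omega

lemma canonG_prod (p e : ℕ) (he : e ≤ p) :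
    (canonG p e : List (LL m)).prod =
      ⟨Finsupp.single (-1) 1 + Finsupp.single (p : ℤ) 1, (e : ℤ)⟩ := by
  rw [prod_eq]
  have hfT : ∀ x ∈ (List.replicate (p+1) (T m)), f x = 0 := by
    intro x hx; rw [List.eq_of_mem_replicate hx]; simp
  have hfT' : ∀ x ∈ (List.replicate (p-e) ((T m)⁻¹)), f x = 0 := by
    intro x hx; rw [List.eq_of_mem_replicate hx]; simp
  ext t
  · simp only [canonG, Ff_cons, Tinv_f, Tinv_z, zero_add, A_f, A_z,
      Ff_append, Ff_t_only hfT, Ff_t_only hfT', Wz_replicate_T, sh_zero', sh_zero,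
      add_zero, sh_add, sh_single, sh_sh, zero_add]
    rw [Finsupp.add_apply, Finsupp.add_apply]
    congr 2
    push_cast
    ring
  · simp only [canonG, Wz_cons, Tinv_z, A_z, Wz_append, Wz_replicate_T, Wz_replicate_Tinv]
    push_cast [Nat.cast_sub he]
    ring

lemma two_single_eq (h1 : (1 : ZMod m) ≠ 0) {s1 s2 a b : ℤ} {c1 c2 : ZMod m} (hab : a ≠ b)
    (hc1 : c1 ≠ 0) (hc2 : c2 ≠ 0)
    (h : Finsupp.single s1 c1 + Finsupp.single s2 c2
        = Finsupp.single a (1 : ZMod m) + Finsupp.single b 1) :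
    (s1 = a ∧ s2 = b ∧ c1 = 1 ∧ c2 = 1) ∨ (s1 = b ∧ s2 = a ∧ c1 = 1 ∧ c2 = 1) := by
  have ev : ∀ t : ℤ, (Finsupp.single s1 c1) t + (Finsupp.single s2 c2) t
      = (Finsupp.single a (1 : ZMod m)) t + (Finsupp.single b (1 : ZMod m)) t := by
    intro t
    rw [← Finsupp.add_apply, ← Finsupp.add_apply, h]
  have hdiag : ∀ s : ℤ, s ≠ a → s ≠ b → s1 = s → s2 = s → False := by
    intro s hsa hsb hs1 hs2
    subst hs1; subst hs2
    have E := ev a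
    rw [Finsupp.single_eq_of_ne' hsa, Finsupp.single_eq_of_ne' hsa,
      Finsupp.single_eq_same, Finsupp.single_eq_of_ne' (Ne.symm hab)] at E
    simp at E
    exact h1 E.symm
  have e1 : s1 = a ∨ s1 = b := by
    by_contra h'
    push_neg at h'
    by_cases hs : s2 = s1
    · exact hdiag s1 h'.1 h'.2 rfl hs
    · have E := ev s1
      rw [Finsupp.single_eq_same, Finsupp.single_eq_of_ne' hs,
        Finsupp.single_eq_of_ne' (Ne.symm h'.1), Finsupp.single_eq_of_ne' (Ne.symm h'.2)] at E
      simp at E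
      exact hc1 E
  have e2 : s2 = a ∨ s2 = b := by
    by_contra h'
    push_neg at h'
    by_cases hs : s1 = s2
    · exact hdiag s2 h'.1 h'.2 hs rfl
    · have E := ev s2
      rw [Finsupp.single_eq_of_ne' hs, Finsupp.single_eq_same,
        Finsupp.single_eq_of_ne' (Ne.symm h'.1), Finsupp.single_eq_of_ne' (Ne.symm h'.2)] at E
      simp at E
      exact hc2 E
  rcases e1 with e1 | e1
  · subst e1
    have e2' : s2 = b := by
      rcases e2 with h2 | h2
      · exfalso
        subst h2
        have E := ev b
        rw [Finsupp.single_eq_of_ne' hab, Finsupp.single_eq_of_ne' hab,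
          Finsupp.single_eq_of_ne' hab, Finsupp.single_eq_same] at E
        simp at E
        exact h1 E.symm
      · exact h2
    subst e2'
    have E1 := ev s1
    rw [Finsupp.single_eq_same, Finsupp.single_eq_of_ne' (Ne.symm hab),
      Finsupp.single_eq_same, Finsupp.single_eq_of_ne' (Ne.symm hab)] at E1
    have E2 := ev s2
    rw [Finsupp.single_eq_of_ne' hab, Finsupp.single_eq_same,
      Finsupp.single_eq_of_ne' hab, Finsupp.single_eq_same] at E2
    simp at E1 E2
    exact Or.inl ⟨rfl, rfl, E1, E2⟩
  · subst e1
    have e2' : s2 = a := by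
      rcases e2 with h2 | h2
      · exact h2
      · exfalso
        subst h2
        have E := ev a
        rw [Finsupp.single_eq_of_ne' (Ne.symm hab), Finsupp.single_eq_of_ne' (Ne.symm hab),
          Finsupp.single_eq_same, Finsupp.single_eq_of_ne' (Ne.symm hab)] at E
        simp at E
        exact h1 E.symm
    subst e2'
    have E1 := ev s1
    rw [Finsupp.single_eq_same, Finsupp.single_eq_of_ne' hab,
      Finsupp.single_eq_of_ne' hab, Finsupp.single_eq_same] at E1
    have E2 := ev s2
    rw [Finsupp.single_eq_of_ne' (Ne.symm hab), Finsupp.single_eq_same,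
      Finsupp.single_eq_same, Finsupp.single_eq_of_ne' (Ne.symm hab)] at E2
    simp at E1 E2
    exact Or.inr ⟨rfl, rfl, E1, E2⟩

end LL
end LampAux
namespace LampAux
namespace LL
variable {m : ℕ}

lemma key (hm : 2 ≤ m) {p e : ℕ} (he1 : 1 ≤ e) (he2 : e < p) {l : List (LL m)}
    (hl : ∀ x ∈ l, IsLetter x)
    (hprod : l.prod = ⟨Finsupp.single (-1) 1 + Finsupp.single (p : ℤ) 1, (e : ℤ)⟩) :
    2 * p + 4 ≤ l.length + e ∧ (l.length + e = 2 * p + 4 → l = canonG p e) := by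
  haveI : Fact (1 < m) := ⟨hm⟩
  have h10 : (1 : ZMod m) ≠ 0 := one_ne_zero
  have hpa : ((p : ℤ)) ≠ -1 := by omega
  rw [prod_eq] at hprod
  rw [LL.mk.injEq] at hprod
  obtain ⟨hFf, hWz⟩ := hprod
  -- visits
  have hA1 : HasA l (-1) := by
    apply hasA_of_Ff_ne hl
    rw [hFf, Finsupp.add_apply, Finsupp.single_eq_same, Finsupp.single_eq_of_ne' hpa]
    simpa using h10
  have hA2 : HasA l (p : ℤ) := by
    apply hasA_of_Ff_ne hl
    rw [hFf, Finsupp.add_apply, Finsupp.single_eq_same,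
      Finsupp.single_eq_of_ne' (fun hh => hpa hh.symm)]
    simpa using h10
  -- t-letter count
  have hT : 2 * p + 2 ≤ countT l + e := by
    rcases walk_two hl hA1 hA2 with hc | hc <;> rw [hWz] at hc <;> omega
  -- a-letter count
  have hd : Disjoint (Finsupp.single (-1 : ℤ) (1 : ZMod m)).support
      (Finsupp.single ((p : ℤ)) (1 : ZMod m)).support := by
    rw [Finsupp.support_single_ne_zero _ h10, Finsupp.support_single_ne_zero _ h10]
    simp only [Finset.disjoint_singleton]
    omega
  have hcard : (Ff l).support.card = 2 := by
    rw [hFf, Finsupp.support_add_eq hd, Finset.card_union_of_disjoint hd,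
      Finsupp.support_single_ne_zero _ h10, Finsupp.support_single_ne_zero _ h10]
    simp
  have hAc : 2 ≤ countA l := by
    have := support_card_le hl
    omega
  have hlen := length_eq_counts l
  constructor
  · omega
  intro heq
  have hAe : countA l = 2 := by omega
  have hTe : countT l + e = 2 * p + 2 := by omega
  -- split at the two a-letters
  obtain ⟨u, x, v, y, w, hsplit, hx0, hy0, hu, hv, hw⟩ :=
    two_split (fun g : LL m => g.z = 0) l hAe
  have hmem' : ∀ g, (g ∈ u ∨ g ∈ v ∨ g ∈ w) → g ∈ l := by
    intro g hg
    rw [hsplit]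
    simp only [List.mem_append, List.mem_cons]
    tauto
  have hlu : ∀ g ∈ u, IsLetter g := fun g hg => hl g (hmem' g (Or.inl hg))
  have hlv : ∀ g ∈ v, IsLetter g := fun g hg => hl g (hmem' g (Or.inr (Or.inl hg)))
  have hlw : ∀ g ∈ w, IsLetter g := fun g hg => hl g (hmem' g (Or.inr (Or.inr hg)))
  have hzu : ∀ g ∈ u, g.z ≠ 0 := fun g hg => hu g hg
  have hzv : ∀ g ∈ v, g.z ≠ 0 := fun g hg => hv g hg
  have hzw : ∀ g ∈ w, g.z ≠ 0 := fun g hg => hw g hg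
  have hfu : ∀ g ∈ u, g.f = 0 := fun g hg => f_of_z_ne (hlu g hg) (hzu g hg)
  have hfv : ∀ g ∈ v, g.f = 0 := fun g hg => f_of_z_ne (hlv g hg) (hzv g hg)
  have hfw : ∀ g ∈ w, g.f = 0 := fun g hg => f_of_z_ne (hlw g hg) (hzw g hg)
  have hxl : IsLetter x := hl x (by rw [hsplit]; simp)
  have hyl : IsLetter y := hl y (by rw [hsplit]; simp)
  obtain ⟨cx, hcx, hcx'⟩ := a_of_z_eq hxl hx0
  obtain ⟨cy, hcy, hcy'⟩ := a_of_z_eq hyl hy0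
  -- compute Ff and Wz of the split list
  have hR : Ff (v ++ y :: w) = sh (Wz v) y.f := by
    rw [Ff_append, Ff_t_only hfv, Ff_cons, Ff_t_only hfw, sh_zero, add_zero, zero_add]
  have hFsplit : Ff l = Finsupp.single (Wz u) cx + Finsupp.single (Wz v + Wz u) cy := by
    rw [hsplit, Ff_append, Ff_t_only hfu, zero_add, Ff_cons, hx0, sh_zero', hR, hcx, hcy,
      sh_add, sh_single, sh_sh, sh_single, zero_add, zero_add]
  have hWsplit : Wz u + Wz v + Wz w = (e : ℤ) := by
    rw [hsplit, Wz_append, Wz_cons, Wz_append, Wz_cons, hx0, hy0] at hWz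
    omega
  have hcnt : countT l = u.length + v.length + w.length := by
    rw [hsplit, countT_append, countT_cons, countT_append, countT_cons,
      if_neg (by simp [hx0]), if_neg (by simp [hy0]), countT_eq_length hzu,
      countT_eq_length hzv, countT_eq_length hzw]
    omega
  have hcu : (Wz u).natAbs ≤ u.length := le_trans (natAbs_Wz_le hlu) (List.length_filter_le _ _)
  have hcv : (Wz v).natAbs ≤ v.length := le_trans (natAbs_Wz_le hlv) (List.length_filter_le _ _)
  have hcw : (Wz w).natAbs ≤ w.length := le_trans (natAbs_Wz_le hlw) (List.length_filter_le _ _)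
  have hcx0 : cx ≠ 0 := by
    rcases hcx' with h | h <;> rw [h] <;> simp [h10]
  have hcy0 : cy ≠ 0 := by
    rcases hcy' with h | h <;> rw [h] <;> simp [h10]
  have hkey := two_single_eq h10 (show (-1 : ℤ) ≠ (p : ℤ) by omega) hcx0 hcy0
    (by rw [← hFsplit, hFf])
  rcases hkey with ⟨hs1, hs2, hc1, hc2⟩ | ⟨hs1, hs2, hc1, hc2⟩
  · -- the good case
    have hWu : Wz u = -1 := hs1
    have hWv : Wz v = (p : ℤ) + 1 := by omega
    have hWw : Wz w = (e : ℤ) - (p : ℤ) := by omega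
    rw [hWu] at hcu
    rw [hWv] at hcv
    rw [hWw] at hcw
    have hlu1 : u.length = 1 := by omega
    have hlv1 : v.length = p + 1 := by omega
    have hlw1 : w.length = p - e := by omega
    have hxA : x = A m := by
      ext t
      · rw [hcx, hc1]; rfl
      · rw [hx0]; rfl
    have hyA : y = A m := by
      ext t
      · rw [hcy, hc2]; rfl
      · rw [hy0]; rfl
    have hurep : u = List.replicate 1 ((T m)⁻¹) := by
      have := rep_Tinv hlu hzu (by rw [hWu, hlu1]; simp)
      rwa [hlu1] at this
    have hvrep : v = List.replicate (p + 1) (T m) := by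
      have := rep_T hlv hzv (by rw [hWv, hlv1]; push_cast; ring)
      rwa [hlv1] at this
    have hwrep : w = List.replicate (p - e) ((T m)⁻¹) := by
      have := rep_Tinv hlw hzw
        (by rw [hWw, hlw1]; push_cast [Nat.cast_sub (le_of_lt he2)]; ring)
      rwa [hlw1] at this
    rw [hsplit, hurep, hvrep, hwrep, hxA, hyA, canonG]
    simp
  · -- impossible case
    exfalso
    have hWu : Wz u = (p : ℤ) := hs1
    have hWv : Wz v = -1 - (p : ℤ) := by omega
    have hWw : Wz w = (e : ℤ) + 1 := by omega
    rw [hWu] at hcu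
    rw [hWv] at hcv
    rw [hWw] at hcw
    omega

end LL
end LampAux
namespace LampAux
open LL

variable {m : ℕ}

lemma lamp_rel_eq_one {m : ℕ} (r : FreeGroup Bool) (hr : r ∈ lampRels m) :
    PresentedGroup.mk (lampRels m) r = 1 := by
  have : r ∈ Subgroup.normalClosure (lampRels m) := Subgroup.subset_normalClosure hr
  exact (QuotientGroup.eq_one_iff r).2 this

lemma la_pow_m : (la m) ^ m = 1 := by
  have h := lamp_rel_eq_one (FreeGroup.of true ^ m) (Or.inl rfl)
  rw [map_pow] at h
  exact h

lemma lamp_comm (i j : ℤ) :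
    Commute ((lt m) ^ i * la m * (lt m) ^ (-i)) ((lt m) ^ j * la m * (lt m) ^ (-j)) := by
  have h := lamp_rel_eq_one
    (⁅FreeGroup.of false ^ i * FreeGroup.of true * FreeGroup.of false ^ (-i),
      FreeGroup.of false ^ j * FreeGroup.of true * FreeGroup.of false ^ (-j)⁆)
    (show _ ∈ lampRels m from Or.inr ⟨i, j, rfl⟩)
  rw [map_commutatorElement, map_mul, map_mul, map_mul, map_mul, map_zpow, map_zpow,
    map_zpow, map_zpow] at h
  exact commutatorElement_eq_one_iff_commute.1 h

/-- the evaluation homomorphism to the concrete model. -/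
noncomputable def phi (m : ℕ) : Lamp m →* LL m :=
  PresentedGroup.toGroup (f := fun b => if b then A m else T m) (by
    intro r hr
    rcases hr with h | ⟨i, j, h⟩
    · rw [Set.mem_singleton_iff] at h
      subst h
      rw [map_pow, FreeGroup.lift_apply_of, if_pos rfl]
      exact A_pow_m
    · subst h
      rw [map_commutatorElement, map_mul, map_mul, map_mul, map_mul, map_zpow, map_zpow,
        map_zpow, map_zpow, FreeGroup.lift_apply_of, FreeGroup.lift_apply_of, if_pos rfl]
      simp only [Bool.false_eq_true, if_false]
      rw [conjT, conjT]
      exact commutatorElement_eq_one_iff_commute.2 (comm_zero _ _ rfl rfl))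

@[simp] lemma phi_la : phi m (la m) = A m := PresentedGroup.toGroup.of _
@[simp] lemma phi_lt : phi m (lt m) = T m := PresentedGroup.toGroup.of _

end LampAux
namespace LampAux
open LL

/-- the alphabet. -/
abbrev Alph (m : ℕ) :=
  {x : Lamp m // x ∈ ({la m, lt m} : Set (Lamp m)) ∨ x⁻¹ ∈ ({la m, lt m} : Set (Lamp m))}

noncomputable def aP (m : ℕ) : Alph m := ⟨la m, Or.inl (Set.mem_insert _ _)⟩
noncomputable def tP (m : ℕ) : Alph m := ⟨lt m, Or.inl (Set.mem_insert_of_mem _ rfl)⟩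
noncomputable def tM (m : ℕ) : Alph m :=
  ⟨(lt m)⁻¹, Or.inr (by rw [inv_inv]; exact Set.mem_insert_of_mem _ rfl)⟩

noncomputable def Phi (m : ℕ) : Alph m → LL m := fun x => phi m x.val

@[simp] lemma Phi_aP : Phi m (aP m) = A m := phi_la
@[simp] lemma Phi_tP : Phi m (tP m) = T m := phi_lt
@[simp] lemma Phi_tM : Phi m (tM m) = (T m)⁻¹ := by
  show phi m ((lt m)⁻¹) = _
  rw [map_inv, phi_lt]

lemma val_cases (x : Alph m) :
    x.val = la m ∨ x.val = lt m ∨ x.val = (la m)⁻¹ ∨ x.val = (lt m)⁻¹ := by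
  rcases x.prop with h | h
  · rcases h with h | h
    · exact Or.inl h
    · exact Or.inr (Or.inl h)
  · rcases h with h | h
    · exact Or.inr (Or.inr (Or.inl (inv_eq_iff_eq_inv.1 h)))
    · rw [Set.mem_singleton_iff] at h
      exact Or.inr (Or.inr (Or.inr (inv_eq_iff_eq_inv.1 h)))

lemma Phi_letters (x : Alph m) : IsLetter (Phi m x) := by
  rcases val_cases x with h | h | h | h <;> unfold Phi <;> rw [h]
  · exact Or.inl phi_la
  · exact Or.inr (Or.inr (Or.inl phi_lt))
  · exact Or.inr (Or.inl (by rw [map_inv, phi_la]))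
  · exact Or.inr (Or.inr (Or.inr (by rw [map_inv, phi_lt])))

open scoped Classical in
/-- decoding a letter of the concrete model back to the lamplighter group. -/
noncomputable def dec (m : ℕ) (g : LL m) : Lamp m :=
  if g.z = 1 then lt m else if g.z = -1 then (lt m)⁻¹
  else if g.f 0 = 1 then la m else (la m)⁻¹

lemma la_inv_of_m_eq_two (hm2 : (-1 : ZMod m) = 1) (hm : 2 ≤ m) : (la m)⁻¹ = la m := by
  have h2 : (2 : ZMod m) = 0 := by
    have := hm2
    linear_combination -this
  have hdvd : m ∣ 2 := by
    have := (ZMod.natCast_eq_zero_iff 2 m).1 (by exact_mod_cast h2)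
    exact this
  have hm2' : m = 2 := le_antisymm (Nat.le_of_dvd (by norm_num) hdvd) hm
  have hpow : la m ^ m = 1 := la_pow_m
  rw [hm2'] at hpow ⊢
  rw [pow_two] at hpow
  exact inv_eq_of_mul_eq_one_left hpow

lemma dec_Phi (hm : 2 ≤ m) (x : Alph m) : x.val = dec m (Phi m x) := by
  haveI : Fact (1 < m) := ⟨hm⟩
  rcases val_cases x with h | h | h | h <;> unfold Phi <;> rw [h]
  · rw [phi_la, dec]
    rw [if_neg (by simp), if_neg (by simp)]
    rw [if_pos (show (A m).f 0 = 1 by rw [A_f]; exact Finsupp.single_eq_same)]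
  · rw [phi_lt, dec, if_pos (show (T m).z = 1 from rfl)]
  · rw [map_inv, phi_la, dec]
    rw [if_neg (by simp), if_neg (by simp)]
    by_cases hc : ((A m)⁻¹).f 0 = 1
    · rw [if_pos hc]
      have h1 : (-1 : ZMod m) = 1 := by
        have := hc
        rw [Ainv_f, Finsupp.single_eq_same] at this
        exact this
      exact la_inv_of_m_eq_two h1 hm
    · rw [if_neg hc]
  · rw [map_inv, phi_lt, dec]
    rw [if_neg (by simp), if_pos (by simp)]

lemma Phi_inj (hm : 2 ≤ m) : Function.Injective (Phi m) := by
  intro x y h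
  apply Subtype.ext
  rw [dec_Phi hm x, dec_Phi hm y, h]

/-- candidate geodesic words. -/
noncomputable def canonW (m a b : ℕ) : List (Alph m) :=
  tM m :: aP m :: (List.replicate a (tP m) ++ aP m :: List.replicate b (tM m))

lemma canonW_length (a b : ℕ) : (canonW m a b).length = a + b + 3 := by
  simp [canonW]
  omega

lemma map_Phi_canonW (a b : ℕ) :
    (canonW m a b).map (Phi m) =
      (T m)⁻¹ :: A m :: (List.replicate a (T m) ++ A m :: List.replicate b ((T m)⁻¹)) := by
  simp [canonW]

lemma map_Phi_canonW_eq_canonG (p e : ℕ) :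
    (canonW m (p + 1) (p - e)).map (Phi m) = canonG p e := by
  rw [map_Phi_canonW, canonG]

lemma mem_letters (w : List (Alph m)) :
    ∀ x ∈ w.map Subtype.val,
      x ∈ ({la m, lt m} : Set (Lamp m)) ∨ x⁻¹ ∈ ({la m, lt m} : Set (Lamp m)) := by
  intro x hx
  rw [List.mem_map] at hx
  obtain ⟨y, _, rfl⟩ := hx
  exact y.prop

lemma wl_le {G : Type*} [Group G] (S : Set G) (g : G) (l : List G)
    (hl : ∀ x ∈ l, x ∈ S ∨ x⁻¹ ∈ S) (hp : l.prod = g) : wordLength S g ≤ l.length :=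
  Nat.sInf_le ⟨l, hl, rfl, hp⟩

lemma phi_prod (w : List (Alph m)) :
    phi m ((w.map Subtype.val).prod) = (w.map (Phi m)).prod := by
  rw [map_list_prod (phi m), List.map_map]
  rfl

lemma canonW_val_prod (a b : ℕ) :
    ((canonW m a b).map Subtype.val).prod
      = (lt m)⁻¹ * (la m * ((lt m) ^ a * (la m * ((lt m)⁻¹) ^ b))) := by
  simp [canonW, aP, tP, tM]

lemma short_rep (k : ℕ) (hk : 1 ≤ k) :
    (lt m)⁻¹ * (la m * ((lt m) ^ k * (la m * ((lt m)⁻¹) ^ k)))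
      = (lt m) ^ (k - 1) * (la m * (((lt m)⁻¹) ^ k * la m)) := by
  have hc := (lamp_comm (m := m) (-1) ((k : ℤ) - 1)).eq
  rw [neg_neg] at hc
  have hn : ((k - 1 : ℕ) : ℤ) = (k : ℤ) - 1 := by
    push_cast [Nat.cast_sub hk]; ring
  have h1 : (lt m) ^ (k : ℕ) = (lt m) ^ ((k : ℤ)) := (zpow_natCast _ _).symm
  have h2 : ((lt m)⁻¹) ^ (k : ℕ) = (lt m) ^ (-(k : ℤ)) := by
    rw [inv_pow, ← zpow_natCast, ← zpow_neg]
  have h3 : (lt m) ^ (k - 1 : ℕ) = (lt m) ^ ((k : ℤ) - 1) := by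
    rw [← zpow_natCast, hn]
  rw [h1, h2, h3]
  calc (lt m)⁻¹ * (la m * ((lt m) ^ ((k:ℤ)) * (la m * (lt m) ^ (-(k:ℤ)))))
      = ((lt m) ^ (-1 : ℤ) * la m * (lt m) ^ (1 : ℤ))
          * ((lt m) ^ ((k:ℤ) - 1) * la m * (lt m) ^ (-((k:ℤ) - 1))) * (lt m) ^ (-1 : ℤ) := by
        group
    _ = ((lt m) ^ ((k:ℤ) - 1) * la m * (lt m) ^ (-((k:ℤ) - 1)))
          * ((lt m) ^ (-1 : ℤ) * la m * (lt m) ^ (1 : ℤ)) * (lt m) ^ (-1 : ℤ) := by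
        rw [hc]
    _ = (lt m) ^ ((k:ℤ) - 1) * (la m * ((lt m) ^ (-(k:ℤ)) * la m)) := by
        group

end LampAux
open LampAux LampAux.LL in
/-- The lamplighter group `L_m` (`m ≥ 2`) with the wreath product generating set `{a, t}`
has no regular language of geodesics: there is no regular language over the alphabet
`{a^{±1}, t^{±1}}` consisting of geodesic words and containing at least one
representative of every group element. -/
theorem lamplighter_no_regular_geodesic_language (m : ℕ) (hm : 2 ≤ m) :
    letI S : Set (Lamp m) := {la m, lt m}
    ¬ ∃ L : Language {x : Lamp m // x ∈ S ∨ x⁻¹ ∈ S},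
        L.IsRegular ∧
        (∀ w ∈ L, (w.map Subtype.val).length = wordLength S (w.map Subtype.val).prod) ∧
        (∀ g : Lamp m, ∃ w ∈ L, (w.map Subtype.val).prod = g) := by
  rintro ⟨L, ⟨σ, hfin, M, hM⟩, hgeo, hsur⟩
  classical
  haveI := hfin
  -- every "right-first" canonical word is forced to be in L
  have forced_in : ∀ k k' : ℕ, 2 ≤ k → k + 2 ≤ k' → canonW m k' k ∈ L := by
    intro k k' hk hkk
    set p := k' - 1 with hp
    set e := k' - 1 - k with he
    have he1 : 1 ≤ e := by omega
    have he2 : e < p := by omega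
    have hp1 : p + 1 = k' := by omega
    have hpe : p - e = k := by omega
    obtain ⟨w, hwL, hwp⟩ := hsur (((canonW m k' k).map Subtype.val).prod)
    have hlen : (w.map Subtype.val).length
        = wordLength {la m, lt m} ((w.map Subtype.val).prod) := hgeo w hwL
    rw [hwp] at hlen
    have hub : wordLength {la m, lt m} (((canonW m k' k).map Subtype.val).prod)
        ≤ k' + k + 3 := by
      have := wl_le ({la m, lt m} : Set (Lamp m)) (((canonW m k' k).map Subtype.val).prod)
        ((canonW m k' k).map Subtype.val) (mem_letters _) rfl
      rwa [List.length_map, canonW_length] at this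
    -- apply the key lemma to the image of w in the concrete model
    have hprod : (w.map (Phi m)).prod
        = (⟨Finsupp.single (-1) 1 + Finsupp.single (p : ℤ) 1, (e : ℤ)⟩ : LL m) := by
      rw [← phi_prod, hwp, phi_prod, ← hp1, ← hpe, map_Phi_canonW_eq_canonG,
        canonG_prod p e (le_of_lt he2)]
    have hK := key hm he1 he2 (fun x hx => by
      rw [List.mem_map] at hx
      obtain ⟨y, _, rfl⟩ := hx
      exact Phi_letters y) hprod
    have hlw : (w.map (Phi m)).length = w.length := List.length_map _
    have hlv : (w.map Subtype.val).length = w.length := List.length_map _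
    have heq : (w.map (Phi m)).length + e = 2 * p + 4 := by omega
    have hwc := hK.2 heq
    have : w = canonW m k' k := by
      apply List.map_injective_iff.2 (Phi_inj hm)
      rw [hwc, ← hp1, ← hpe, map_Phi_canonW_eq_canonG]
    rwa [this] at hwL
  -- the corresponding pumped-down words are non-geodesic, hence not in L
  have forced_out : ∀ k : ℕ, 2 ≤ k → canonW m k k ∉ L := by
    intro k hk hmem
    have hlen : ((canonW m k k).map Subtype.val).length
        = wordLength {la m, lt m} (((canonW m k k).map Subtype.val).prod) := hgeo _ hmem
    have hlenv : ((canonW m k k).map Subtype.val).length = k + k + 3 := by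
      rw [List.length_map, canonW_length]
    -- shorter representative
    have hub : wordLength {la m, lt m} (((canonW m k k).map Subtype.val).prod) ≤ 2 * k + 1 := by
      have hrep := wl_le ({la m, lt m} : Set (Lamp m)) (((canonW m k k).map Subtype.val).prod)
        (List.replicate (k - 1) (lt m) ++ la m ::
          (List.replicate k ((lt m)⁻¹) ++ [la m]))
        (by
          intro x hx
          simp only [List.mem_append, List.mem_cons, List.mem_replicate,
            List.not_mem_nil, or_false] at hx
          rcases hx with ⟨_, rfl⟩ | rfl | ⟨_, rfl⟩ | rfl
          · exact Or.inl (by simp)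
          · exact Or.inl (by simp)
          · exact Or.inr (by simp)
          · exact Or.inl (by simp))
        (by
          rw [canonW_val_prod, short_rep k (by omega)]
          simp [List.prod_append, List.prod_replicate])
      have : (List.replicate (k - 1) (lt m) ++ la m ::
          (List.replicate k ((lt m)⁻¹) ++ [la m])).length = 2 * k + 1 := by
        simp
        omega
      omega
    omega
  -- pumping via the finiteness of the automaton
  have main : ∀ n1 n2 : ℕ, n1 < n2
      → M.eval ((tM m : Alph m) :: aP m :: (List.replicate (2*n1+2) (tP m) ++ [aP m]))
        = M.eval ((tM m : Alph m) :: aP m :: (List.replicate (2*n2+2) (tP m) ++ [aP m]))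
      → False := by
    intro n1 n2 hlt heval
    set k := 2 * n1 + 2 with hkdef
    set k' := 2 * n2 + 2 with hk'def
    have hsplit : ∀ a b : ℕ, canonW m a b
        = ((tM m : Alph m) :: aP m :: (List.replicate a (tP m) ++ [aP m]))
          ++ List.replicate b (tM m) := by
      intro a b
      simp [canonW]
    have hin := forced_in k k' (by omega) (by omega)
    have hout := forced_out k (by omega)
    apply hout
    rw [← hM] at hin ⊢
    rw [DFA.mem_accepts] at hin ⊢
    rw [hsplit] at hin ⊢
    have hev : ∀ (x y : List (Alph m)), M.eval (x ++ y) = M.evalFrom (M.eval x) y :=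
      fun x y => M.evalFrom_of_append M.start x y
    rw [hev] at hin ⊢
    rw [heval]
    exact hin
  obtain ⟨n1, n2, hne, hFeq⟩ := Finite.exists_ne_map_eq_of_infinite
    (fun n : ℕ => M.eval ((tM m : Alph m) :: aP m :: (List.replicate (2*n+2) (tP m) ++ [aP m])))
  rcases hne.lt_or_gt with h | h
  · exact main n1 n2 h hFeq
  · exact main n2 n1 h hFeq.symm
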